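/- Let ω := √3/2, let P be the 2×2 real matrix [[1, 0], [−1/2, √3/6]], let F₀(x, y) := (3/2 − x/2 − x·y³, 1/2 − (3/2)·y + x·y³), and define G : ℝ² → ℝ² by G(u, v) := P⁻¹ · F₀(u + 1, −u/2 + (√3/6)·v + 1). Then G(0, 0) = (0, 0), the total derivative of G at (0,0) is the matrix [[0, −ω], [ω, 0]], and, writing (f¹, f²) := G(u,v) − ([[0,−ω],[ω,0]]·(u,v)) for the nonlinear part and denoting by subscripts its partial derivatives evaluated at (0,0), one has (1/16)(f¹_{uuu} + f¹_{uvv} + f²_{uuv} + f²_{vvv}) + (1/(16ω))(f¹_{uv}(f¹_{uu} + f¹_{vv}) − f²_{uv}(f²_{uu} + f²_{vv}) − f¹_{uu}·f²_{uu} + f¹_{vv}·f²_{vv}) = −1/8. -/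

import Mathlib

noncomputable section

/-- `ω = √3/2`. -/
def ω12 : ℝ := Real.sqrt 3 / 2

/-- The change-of-variables matrix `P = [[1, 0], [−1/2, √3/6]]`. -/
def P12 : Matrix (Fin 2) (Fin 2) ℝ := !![1, 0; -1/2, Real.sqrt 3 / 6]

/-- The vector field at the bifurcation value `k = 0`:
`F₀(x,y) = (3/2 − x/2 − xy³, 1/2 − (3/2)y + xy³)`. -/
def F0 : (Fin 2 → ℝ) → (Fin 2 → ℝ) :=
  fun p => ![3/2 - p 0 / 2 - p 0 * (p 1) ^ 3, 1/2 - 3/2 * p 1 + p 0 * (p 1) ^ 3]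

/-- `G(u,v) = P⁻¹ · F₀(u + 1, −u/2 + (√3/6)v + 1)`. -/
def G12 : (Fin 2 → ℝ) → (Fin 2 → ℝ) :=
  fun z => P12⁻¹.mulVec (F0 (P12.mulVec z + ![1, 1]))

/-- The nonlinear part `f = (f¹, f²)` of `G`. -/
def f12 : (Fin 2 → ℝ) → (Fin 2 → ℝ) :=
  fun z => G12 z - (!![0, -ω12; ω12, 0]).mulVec z

/-- First component of the nonlinear part, as a function of `(u, v)`. -/
def f1 (u v : ℝ) : ℝ := f12 ![u, v] 0

/-- Second component of the nonlinear part, as a function of `(u, v)`. -/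
def f2 (u v : ℝ) : ℝ := f12 ![u, v] 1

end

lemma s_pos : 0 < Real.sqrt 3 := Real.sqrt_pos.mpr (by norm_num)
lemma s_mul : Real.sqrt 3 * Real.sqrt 3 = 3 := Real.mul_self_sqrt (by norm_num)
lemma hPinv : P12⁻¹ = !![1, 0; Real.sqrt 3, 2 * Real.sqrt 3] := by
  apply Matrix.inv_eq_right_inv
  ext i j
  fin_cases i <;> fin_cases j <;>
    simp [P12, Matrix.mul_apply, Fin.sum_univ_two, Matrix.one_apply]
  · linear_combination (1/6 : ℝ) * s_mul
  · linear_combination (1/3 : ℝ) * s_mul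

lemma key (u v : ℝ) (i : Fin 2) : f12 ![u, v] i =
    ![3/2 - (u+1)/2 - (u+1)*(-u/2 + Real.sqrt 3/6*v + 1)^3 + ω12 * v,
      Real.sqrt 3 * (3/2 - (u+1)/2 - (u+1)*(-u/2 + Real.sqrt 3/6*v + 1)^3)
        + 2*Real.sqrt 3 * (1/2 - 3/2*(-u/2 + Real.sqrt 3/6*v + 1)
            + (u+1)*(-u/2 + Real.sqrt 3/6*v + 1)^3) - ω12 * u] i := by
  have hsv : P12.mulVec ![u, v] + ![1, 1] = ![u + 1, -u/2 + Real.sqrt 3 / 6 * v + 1] := by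
    funext j; fin_cases j <;>
      simp [P12, Matrix.mulVec, dotProduct, Fin.sum_univ_two] <;> ring
  simp only [f12, G12, hsv, hPinv, Pi.sub_apply]
  fin_cases i <;>
    simp [F0, Matrix.mulVec, dotProduct, Fin.sum_univ_two] <;> ring

lemma hf1 (u v : ℝ) : f1 u v =
    (-1/4:ℝ)*v^2 + (-1/72:ℝ)*v^3*Real.sqrt 3 + (-1/8:ℝ)*u*v^2 + (-1/72:ℝ)*u*v^3*Real.sqrt 3
    + (3/4:ℝ)*u^2 + (3/8:ℝ)*u^2*v*Real.sqrt 3 + (1/8:ℝ)*u^2*v^2 + (-5/8:ℝ)*u^3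
    + (-1/8:ℝ)*u^3*v*Real.sqrt 3 + (1/8:ℝ)*u^4 := by
  have h := key u v 0
  simp only [f1, ω12] at h ⊢
  rw [h]
  simp only [Matrix.cons_val_zero]
  linear_combination ((-1/12:ℝ)*v^2 + (-1/216:ℝ)*v^3*Real.sqrt 3 + (-1/24:ℝ)*u*v^2
    + (-1/216:ℝ)*u*v^3*Real.sqrt 3 + (1/24:ℝ)*u^2*v^2) * s_mul

lemma hf2 (u v : ℝ) : f2 u v =
    (1/4:ℝ)*v^2*Real.sqrt 3 + (1/24:ℝ)*v^3 + (1/8:ℝ)*u*v^2*Real.sqrt 3 + (1/24:ℝ)*u*v^3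
    + (-3/4:ℝ)*u^2*Real.sqrt 3 + (-9/8:ℝ)*u^2*v + (-1/8:ℝ)*u^2*v^2*Real.sqrt 3
    + (5/8:ℝ)*u^3*Real.sqrt 3 + (3/8:ℝ)*u^3*v + (-1/8:ℝ)*u^4*Real.sqrt 3 := by
  have h := key u v 1
  simp only [f2, ω12] at h ⊢
  rw [h]
  simp only [Matrix.cons_val_one, Matrix.head_cons, Matrix.cons_val_zero]
  linear_combination ((1/12:ℝ)*v^2*Real.sqrt 3 + (1/72:ℝ)*v^3 + (1/216:ℝ)*v^3*Real.sqrt 3^2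
    + (1/24:ℝ)*u*v^2*Real.sqrt 3 + (1/72:ℝ)*u*v^3 + (1/216:ℝ)*u*v^3*Real.sqrt 3^2
    + (-3/8:ℝ)*u^2*v + (-1/24:ℝ)*u^2*v^2*Real.sqrt 3 + (1/8:ℝ)*u^3*v) * s_mul

lemma dq (a b c d e : ℝ) :
    deriv (fun x : ℝ => a + b*x + c*x^2 + d*x^3 + e*x^4)
      = fun x => b + (2*c)*x + (3*d)*x^2 + (4*e)*x^3 + 0*x^4 := by
  funext x
  have h : HasDerivAt (fun x : ℝ => a + b*x + c*x^2 + d*x^3 + e*x^4)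
      (b + (2*c)*x + (3*d)*x^2 + (4*e)*x^3 + 0*x^4) x := by
    have h0 := hasDerivAt_const x a
    have h1 := (hasDerivAt_id x).const_mul b
    have h2 := (hasDerivAt_pow 2 x).const_mul c
    have h3 := (hasDerivAt_pow 3 x).const_mul d
    have h4 := (hasDerivAt_pow 4 x).const_mul e
    refine ((((h0.add h1).add h2).add h3).add h4).congr_deriv ?_
    push_cast; ring
  exact h.deriv

lemma d0 (a b c d e : ℝ) : deriv (fun x : ℝ => a + b*x + c*x^2 + d*x^3 + e*x^4) 0 = b := by
  rw [dq]; ring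

lemma i2 (a b c d e : ℝ) :
    iteratedDeriv 2 (fun x : ℝ => a + b*x + c*x^2 + d*x^3 + e*x^4) 0 = 2*c := by
  rw [show (2:ℕ) = 1+1 from rfl, iteratedDeriv_succ, iteratedDeriv_one, dq, d0]

lemma i3 (a b c d e : ℝ) :
    iteratedDeriv 3 (fun x : ℝ => a + b*x + c*x^2 + d*x^3 + e*x^4) 0 = 6*d := by
  rw [show (3:ℕ) = (1+1)+1 from rfl, iteratedDeriv_succ, iteratedDeriv_succ,
    iteratedDeriv_one, dq, dq, d0]; ring

noncomputable section
def M0 : Matrix (Fin 2) (Fin 2) ℝ := !![-3/2, -3; 1, 3/2]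
def PCLM : (Fin 2 → ℝ) →L[ℝ] (Fin 2 → ℝ) := LinearMap.toContinuousLinearMap (Matrix.mulVecLin P12)
def QCLM : (Fin 2 → ℝ) →L[ℝ] (Fin 2 → ℝ) := LinearMap.toContinuousLinearMap (Matrix.mulVecLin P12⁻¹)
def MCLM : (Fin 2 → ℝ) →L[ℝ] (Fin 2 → ℝ) := LinearMap.toContinuousLinearMap (Matrix.mulVecLin M0)
end

lemma hF0deriv : HasFDerivAt F0 MCLM ![1, 1] := by
  apply hasFDerivAt_pi''
  intro i
  have hp0 := hasFDerivAt_apply (𝕜 := ℝ) (0 : Fin 2) (![1,1] : Fin 2 → ℝ)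
  have hp1 := hasFDerivAt_apply (𝕜 := ℝ) (1 : Fin 2) (![1,1] : Fin 2 → ℝ)
  fin_cases i
  · have hfun : (fun p : Fin 2 → ℝ => F0 p 0)
        = fun p : Fin 2 → ℝ => 3/2 - (1/2 : ℝ) * p 0 - p 0 * (p 1 * p 1 * p 1) := by
      funext p; show 3/2 - p 0 / 2 - p 0 * (p 1)^3 = _; ring
    show HasFDerivAt (fun p : Fin 2 → ℝ => F0 p 0) _ ![1,1]
    rw [hfun]
    have h := ((hasFDerivAt_const (3/2 : ℝ) (![1,1] : Fin 2 → ℝ)).sub (hp0.const_mul (1/2))).sub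
      (hp0.mul ((hp1.mul hp1).mul hp1))
    refine h.congr_fderiv ?_
    ext z
    simp [MCLM, M0, Matrix.mulVecLin, Matrix.mulVec, dotProduct, Fin.sum_univ_two]
    ring
  · have hfun : (fun p : Fin 2 → ℝ => F0 p 1)
        = fun p : Fin 2 → ℝ => 1/2 - (3/2 : ℝ) * p 1 + p 0 * (p 1 * p 1 * p 1) := by
      funext p; show 1/2 - 3/2 * p 1 + p 0 * (p 1)^3 = _; ring
    show HasFDerivAt (fun p : Fin 2 → ℝ => F0 p 1) _ ![1,1]
    rw [hfun]
    have h := ((hasFDerivAt_const (1/2 : ℝ) (![1,1] : Fin 2 → ℝ)).sub (hp1.const_mul (3/2))).add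
      (hp0.mul ((hp1.mul hp1).mul hp1))
    refine h.congr_fderiv ?_
    ext z
    simp [MCLM, M0, Matrix.mulVecLin, Matrix.mulVec, dotProduct, Fin.sum_univ_two]
    ring

lemma hin1 : (fun v => deriv (fun u => f1 u v) 0)
    = fun v : ℝ => 0 + 0*v + (-1/8)*v^2 + (-1/72*Real.sqrt 3)*v^3 + 0*v^4 := by
  funext v
  rw [show (fun u => f1 u v) = fun u : ℝ =>
      ((-1/4)*v^2 + (-1/72)*v^3*Real.sqrt 3)
      + ((-1/8)*v^2 + (-1/72)*v^3*Real.sqrt 3)*u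
      + (3/4 + 3/8*v*Real.sqrt 3 + 1/8*v^2)*u^2
      + (-5/8 + (-1/8)*v*Real.sqrt 3)*u^3 + (1/8)*u^4
    from funext fun u => by rw [hf1]; ring, d0]
  ring

lemma hin2 : (fun v => iteratedDeriv 2 (fun u => f2 u v) 0)
    = fun v : ℝ => (-3/2*Real.sqrt 3) + (-9/4)*v + (-1/4*Real.sqrt 3)*v^2 + 0*v^3 + 0*v^4 := by
  funext v
  rw [show (fun u => f2 u v) = fun u : ℝ =>
      ((1/4)*v^2*Real.sqrt 3 + (1/24)*v^3)
      + ((1/8)*v^2*Real.sqrt 3 + (1/24)*v^3)*u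
      + ((-3/4)*Real.sqrt 3 + (-9/8)*v + (-1/8)*v^2*Real.sqrt 3)*u^2
      + ((5/8)*Real.sqrt 3 + (3/8)*v)*u^3 + ((-1/8)*Real.sqrt 3)*u^4
    from funext fun u => by rw [hf2]; ring, i2]
  ring

lemma hin2' : (fun v => deriv (fun u => f2 u v) 0)
    = fun v : ℝ => 0 + 0*v + (1/8*Real.sqrt 3)*v^2 + (1/24)*v^3 + 0*v^4 := by
  funext v
  rw [show (fun u => f2 u v) = fun u : ℝ =>
      ((1/4)*v^2*Real.sqrt 3 + (1/24)*v^3)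
      + ((1/8)*v^2*Real.sqrt 3 + (1/24)*v^3)*u
      + ((-3/4)*Real.sqrt 3 + (-9/8)*v + (-1/8)*v^2*Real.sqrt 3)*u^2
      + ((5/8)*Real.sqrt 3 + (3/8)*v)*u^3 + ((-1/8)*Real.sqrt 3)*u^4
    from funext fun u => by rw [hf2]; ring, d0]
  ring

lemma val1 : iteratedDeriv 3 (fun u => f1 u 0) 0 = -15/4 := by
  rw [show (fun u => f1 u 0) = fun u : ℝ => 0 + 0*u + (3/4)*u^2 + (-5/8)*u^3 + (1/8)*u^4
    from funext fun u => by rw [hf1]; ring, i3]; norm_num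

lemma val2 : iteratedDeriv 2 (fun v => deriv (fun u => f1 u v) 0) 0 = -1/4 := by
  rw [hin1, i2]; norm_num

lemma val3 : deriv (fun v => iteratedDeriv 2 (fun u => f2 u v) 0) 0 = -9/4 := by
  rw [hin2, d0]

lemma val4 : iteratedDeriv 3 (fun v => f2 0 v) 0 = 1/4 := by
  rw [show (fun v => f2 0 v) = fun v : ℝ =>
      0 + 0*v + (1/4*Real.sqrt 3)*v^2 + (1/24)*v^3 + 0*v^4
    from funext fun v => by rw [hf2]; ring, i3]; norm_num

lemma val5 : deriv (fun v => deriv (fun u => f1 u v) 0) 0 = 0 := by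
  rw [hin1, d0]

lemma val6 : deriv (fun v => deriv (fun u => f2 u v) 0) 0 = 0 := by
  rw [hin2', d0]

lemma val7 : iteratedDeriv 2 (fun u => f1 u 0) 0 = 3/2 := by
  rw [show (fun u => f1 u 0) = fun u : ℝ => 0 + 0*u + (3/4)*u^2 + (-5/8)*u^3 + (1/8)*u^4
    from funext fun u => by rw [hf1]; ring, i2]; norm_num

lemma val8 : iteratedDeriv 2 (fun v => f1 0 v) 0 = -1/2 := by
  rw [show (fun v => f1 0 v) = fun v : ℝ =>
      0 + 0*v + (-1/4)*v^2 + (-1/72*Real.sqrt 3)*v^3 + 0*v^4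
    from funext fun v => by rw [hf1]; ring, i2]; norm_num

lemma val9 : iteratedDeriv 2 (fun u => f2 u 0) 0 = -3/2*Real.sqrt 3 := by
  rw [show (fun u => f2 u 0) = fun u : ℝ =>
      0 + 0*u + (-3/4*Real.sqrt 3)*u^2 + (5/8*Real.sqrt 3)*u^3 + (-1/8*Real.sqrt 3)*u^4
    from funext fun u => by rw [hf2]; ring, i2]; ring

lemma val10 : iteratedDeriv 2 (fun v => f2 0 v) 0 = 1/2*Real.sqrt 3 := by
  rw [show (fun v => f2 0 v) = fun v : ℝ =>
      0 + 0*v + (1/4*Real.sqrt 3)*v^2 + (1/24)*v^3 + 0*v^4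
    from funext fun v => by rw [hf2]; ring, i2]; ring

lemma h00 : P12.mulVec ![(0:ℝ),0] + ![1,1] = ![1,1] := by
  funext j; fin_cases j <;>
    simp [P12, Matrix.mulVec, dotProduct, Fin.sum_univ_two]

lemma hG12deriv : HasFDerivAt G12 (QCLM.comp (MCLM.comp PCLM)) ![0,0] := by
  have ha : HasFDerivAt (fun z : Fin 2 → ℝ => P12.mulVec z + ![1,1]) PCLM ![0,0] :=
    PCLM.hasFDerivAt.add_const ![1,1]
  have hb : HasFDerivAt F0 MCLM (P12.mulVec ![(0:ℝ),0] + ![1,1]) := by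
    rw [h00]; exact hF0deriv
  have hc := QCLM.hasFDerivAt (x := F0 (P12.mulVec ![(0:ℝ),0] + ![1,1]))
  exact hc.comp ![0,0] (hb.comp (f := fun z : Fin 2 → ℝ => P12.mulVec z + ![1,1]) ![0,0] ha)


/-- `G(0,0) = (0,0)`, the total derivative of `G` at the origin is
`[[0, −ω], [ω, 0]]`, and the first Lyapunov quantity, the displayed combination of
second and third partial derivatives of the nonlinear part at the origin,
equals `−1/8`. -/
theorem stmt_12 :
    G12 ![0, 0] = ![0, 0] ∧
    DifferentiableAt ℝ G12 ![0, 0] ∧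
    fderiv ℝ G12 ![0, 0] ![1, 0] = ![0, ω12] ∧
    fderiv ℝ G12 ![0, 0] ![0, 1] = ![-ω12, 0] ∧
    (1 / 16) * (iteratedDeriv 3 (fun u => f1 u 0) 0
        + iteratedDeriv 2 (fun v => deriv (fun u => f1 u v) 0) 0
        + deriv (fun v => iteratedDeriv 2 (fun u => f2 u v) 0) 0
        + iteratedDeriv 3 (fun v => f2 0 v) 0)
      + (1 / (16 * ω12)) *
        (deriv (fun v => deriv (fun u => f1 u v) 0) 0 *
            (iteratedDeriv 2 (fun u => f1 u 0) 0 + iteratedDeriv 2 (fun v => f1 0 v) 0)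
          - deriv (fun v => deriv (fun u => f2 u v) 0) 0 *
            (iteratedDeriv 2 (fun u => f2 u 0) 0 + iteratedDeriv 2 (fun v => f2 0 v) 0)
          - iteratedDeriv 2 (fun u => f1 u 0) 0 * iteratedDeriv 2 (fun u => f2 u 0) 0
          + iteratedDeriv 2 (fun v => f1 0 v) 0 * iteratedDeriv 2 (fun v => f2 0 v) 0)
      = -1/8 := by
  refine ⟨?_, hG12deriv.differentiableAt, ?_, ?_, ?_⟩
  · show P12⁻¹.mulVec (F0 (P12.mulVec ![0,0] + ![1,1])) = ![0,0]
    rw [h00, show F0 ![1,1] = ![0,0] from funext fun j => by fin_cases j <;> norm_num [F0],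
      hPinv]
    funext j; fin_cases j <;> simp [Matrix.mulVec, dotProduct, Fin.sum_univ_two]
  · rw [hG12deriv.fderiv]
    show QCLM (MCLM (PCLM ![1,0])) = _
    simp only [QCLM, MCLM, PCLM, LinearMap.coe_toContinuousLinearMap', Matrix.mulVecLin_apply,
      hPinv]
    funext j; fin_cases j <;>
      simp [M0, P12, ω12, Matrix.mulVec, dotProduct, Fin.sum_univ_two] <;>
      first
      | ring
      | norm_num
      | linear_combination (1/8 : ℝ) * s_mul
      | linear_combination (-1/8 : ℝ) * s_mul
      | linear_combination (1/4 : ℝ) * s_mul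
      | linear_combination (-1/4 : ℝ) * s_mul
  · rw [hG12deriv.fderiv]
    show QCLM (MCLM (PCLM ![0,1])) = _
    simp only [QCLM, MCLM, PCLM, LinearMap.coe_toContinuousLinearMap', Matrix.mulVecLin_apply,
      hPinv]
    funext j; fin_cases j <;>
      simp [M0, P12, ω12, Matrix.mulVec, dotProduct, Fin.sum_univ_two] <;>
      first
      | ring
      | norm_num
      | linear_combination (1/8 : ℝ) * s_mul
      | linear_combination (-1/8 : ℝ) * s_mul
      | linear_combination (1/4 : ℝ) * s_mul
      | linear_combination (-1/4 : ℝ) * s_mul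
  · rw [val1, val2, val3, val4, val5, val6, val7, val8, val9, val10, ω12]
    have h : Real.sqrt 3 ≠ 0 := ne_of_gt s_pos
    field_simp
    ring
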